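/- arXiv:1701.08532 — 2 statements merged into one kernel-verified Lean document; each statement's English description precedes it below -/
import Mathlib

section
/- The Newton polytope Δ of the standard Laurent polynomial of type (d_1,…,d_k;I) is reflexive: it contains the origin in its interior and its dual polytope {x : ⟨x,y⟩ ≥ −1 for all y ∈ Δ} has all vertices in the integer lattice ℤ^n. -/
open Set

variable (k : ℕ) (d : Fin k → ℕ) (I : ℕ)

abbrev Coords := ((i : Fin k) × Fin (d i - 1)) ⊕ Fin (I - 1)

def dotR (x y : Coords k d I → ℝ) : ℝ := ∑ c, x c * y c

/-- Vertices of `Δ`, the Newton polytope of the standard Laurent polynomial of type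
`(d_1,…,d_k;I)`. -/
def deltaVerts : Set (Coords k d I → ℝ) :=
  (Set.range fun c : (i : Fin k) → Option (Fin (d i - 1)) =>
    Sum.elim (fun p : (i : Fin k) × Fin (d i - 1) =>
      if c p.1 = some p.2 then (d p.1 : ℝ) - 1 else -1) (fun _ => -1)) ∪
  (Set.range fun q : Fin (I - 1) =>
    Sum.elim (fun _ => (0 : ℝ)) (fun q' => if q' = q then 1 else 0))

abbrev Choice := (i : Fin k) → Option (Fin (d i - 1))

def uVert (c : Choice k d) : Coords k d I → ℝ :=
  Sum.elim (fun p : (i : Fin k) × Fin (d i - 1) =>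
    if c p.1 = some p.2 then (d p.1 : ℝ) - 1 else -1) (fun _ => -1)

def eVert (q : Fin (I - 1)) : Coords k d I → ℝ :=
  Sum.elim (fun _ => (0 : ℝ)) (fun q' => if q' = q then 1 else 0)

lemma uVert_mem (c : Choice k d) : uVert k d I c ∈ deltaVerts k d I := Or.inl ⟨c, rfl⟩

lemma eVert_mem (q : Fin (I - 1)) : eVert k d I q ∈ deltaVerts k d I := Or.inr ⟨q, rfl⟩

def Sb (x : Coords k d I → ℝ) (i : Fin k) : ℝ := ∑ p, x (Sum.inl ⟨i, p⟩)

def Tt (x : Coords k d I → ℝ) : ℝ := ∑ q, x (Sum.inr q)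

def phi (x : Coords k d I → ℝ) (i : Fin k) : Option (Fin (d i - 1)) → ℝ
  | none => -(Sb k d I x i)
  | some p => (d i : ℝ) * x (Sum.inl ⟨i, p⟩) - Sb k d I x i

lemma sum_coords (f : Coords k d I → ℝ) :
    ∑ c, f c = (∑ i, ∑ p, f (Sum.inl ⟨i, p⟩)) + ∑ q, f (Sum.inr q) := by
  rw [Fintype.sum_sum_type, ← Finset.univ_sigma_univ, Finset.sum_sigma]

lemma dot_uVert (x : Coords k d I → ℝ) (c : Choice k d) :
    dotR k d I x (uVert k d I c) = (∑ i, phi k d I x i (c i)) - Tt k d I x := by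
  unfold dotR
  rw [sum_coords, sub_eq_add_neg]
  congr 1
  · refine Finset.sum_congr rfl fun i _ => ?_
    cases hc : c i with
    | none =>
        have h : ∀ p : Fin (d i - 1),
            x (Sum.inl ⟨i, p⟩) * uVert k d I c (Sum.inl ⟨i, p⟩) = -(x (Sum.inl ⟨i, p⟩)) := by
          intro p; simp [uVert, hc]
        rw [Finset.sum_congr rfl fun p _ => h p]
        simp [phi, Sb]
    | some p₀ =>
        have h : ∀ p : Fin (d i - 1),
            x (Sum.inl ⟨i, p⟩) * uVert k d I c (Sum.inl ⟨i, p⟩)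
              = (if p = p₀ then (d i : ℝ) * x (Sum.inl ⟨i, p⟩) else 0) - x (Sum.inl ⟨i, p⟩) := by
          intro p
          rcases eq_or_ne p p₀ with h | h
          · subst h; simp [uVert, hc]; ring
          · simp [uVert, hc, h, (Option.some_injective _).ne_iff.2 (Ne.symm h)]
        rw [Finset.sum_congr rfl fun p _ => h p, Finset.sum_sub_distrib,
          Finset.sum_ite_eq' Finset.univ p₀ (fun p => (d i : ℝ) * x (Sum.inl ⟨i, p⟩))]
        simp [phi, Sb]
  · simp [uVert, Tt]

lemma dot_eVert (x : Coords k d I → ℝ) (q : Fin (I - 1)) :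
    dotR k d I x (eVert k d I q) = x (Sum.inr q) := by
  unfold dotR
  rw [sum_coords]
  simp [eVert, mul_ite, Finset.sum_ite_eq' Finset.univ q]



lemma sum_prod_choice (f : ∀ i, Option (Fin (d i - 1)) → ℝ) :
    ∑ c : Choice k d, ∏ i, f i (c i) = ∏ i, ∑ o, f i o :=
  (Fintype.prod_sum f).symm

lemma sum_prod_choice_mul (f : ∀ i, Option (Fin (d i - 1)) → ℝ) (i₀ : Fin k)
    (g : Option (Fin (d i₀ - 1)) → ℝ) :
    ∑ c : Choice k d, (∏ i, f i (c i)) * g (c i₀)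
      = (∏ i ∈ Finset.univ.erase i₀, ∑ o, f i o) * ∑ o, f i₀ o * g o := by
  classical
  set h : ∀ i, Option (Fin (d i - 1)) → ℝ :=
    Function.update f i₀ (fun o => f i₀ o * g o) with hh
  have key : ∀ c : Choice k d,
      (∏ i, f i (c i)) * g (c i₀) = ∏ i, h i (c i) := by
    intro c
    rw [← Finset.mul_prod_erase Finset.univ (fun i => h i (c i)) (Finset.mem_univ i₀),
        ← Finset.mul_prod_erase Finset.univ (fun i => f i (c i)) (Finset.mem_univ i₀),
        Finset.prod_congr rfl
          (fun i hi => by rw [hh, Function.update_of_ne (Finset.ne_of_mem_erase hi)] :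
            ∀ i ∈ Finset.univ.erase i₀, h i (c i) = f i (c i))]
    simp only [hh, Function.update_self]
    ring
  rw [Finset.sum_congr rfl fun c _ => key c, sum_prod_choice,
    ← Finset.mul_prod_erase Finset.univ (fun i => ∑ o, h i o) (Finset.mem_univ i₀),
    Finset.prod_congr rfl
      (fun i hi => by rw [hh, Function.update_of_ne (Finset.ne_of_mem_erase hi)] :
        ∀ i ∈ Finset.univ.erase i₀, ∑ o, h i o = ∑ o, f i o)]
  simp only [hh, Function.update_self]
  ring

abbrev VIdx := ((i : Fin k) × Option (Fin (d i - 1))) ⊕ (Fin (I - 1) ⊕ Unit)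

def vmapZ : VIdx k d I → Coords k d I → ℤ
  | Sum.inl s => Sum.elim
      (fun p : (i : Fin k) × Fin (d i - 1) =>
        (if (⟨p.1, some p.2⟩ : (i : Fin k) × Option (Fin (d i - 1))) = s then (I : ℤ) else 0)
          + (if s.2 = none ∧ p.1 = s.1 then -(I : ℤ) else 0))
      (fun _ => -1)
  | Sum.inr (Sum.inl q₀) => Sum.elim (fun _ => 0) (fun q => if q = q₀ then (I : ℤ) - 1 else -1)
  | Sum.inr (Sum.inr _) => Sum.elim (fun _ => 0) (fun _ => -1)

def vmapR (j : VIdx k d I) : Coords k d I → ℝ := fun c => ((vmapZ k d I j c : ℤ) : ℝ)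


lemma convex_dual_halfspace (v : Coords k d I → ℝ) :
    Convex ℝ {y : Coords k d I → ℝ | dotR k d I v y ≥ -1} := by
  have hlin : IsLinearMap ℝ (fun y : Coords k d I → ℝ => dotR k d I v y) := by
    constructor
    · intro y z; simp [dotR, mul_add, Finset.sum_add_distrib]
    · intro r y
      simp only [dotR, Pi.smul_apply, smul_eq_mul, Finset.mul_sum]
      exact Finset.sum_congr rfl fun c _ => by ring
  exact convex_halfSpace_ge hlin (-1)

lemma convex_Q :
    Convex ℝ {x : Coords k d I → ℝ |
      ∀ y ∈ convexHull ℝ (deltaVerts k d I), dotR k d I x y ≥ -1} := by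
  intro x₁ hx₁ x₂ hx₂ a b ha hb hab
  intro y hy
  have h1 := hx₁ y hy
  have h2 := hx₂ y hy
  have hexp : dotR k d I (a • x₁ + b • x₂) y = a * dotR k d I x₁ y + b * dotR k d I x₂ y := by
    simp only [dotR, Pi.add_apply, Pi.smul_apply, smul_eq_mul, Finset.mul_sum,
      ← Finset.sum_add_distrib]
    exact Finset.sum_congr rfl fun c _ => by ring
  rw [ge_iff_le, hexp]
  have ha1 : a * (-1) ≤ a * dotR k d I x₁ y := mul_le_mul_of_nonneg_left h1 ha
  have hb1 : b * (-1) ≤ b * dotR k d I x₂ y := mul_le_mul_of_nonneg_left h2 hb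
  nlinarith

lemma castIm1 (hI : 1 ≤ I) : ((I - 1 : ℕ) : ℝ) = (I : ℝ) - 1 := by
  push_cast [Nat.cast_sub hI]; ring

lemma vmapR_dot_uVert_ge (hd : ∀ i, 2 ≤ d i) (hI : 1 ≤ I) (j : VIdx k d I) (c : Choice k d) :
    dotR k d I (vmapR k d I j) (uVert k d I c) ≥ -1 := by
  rw [dot_uVert]
  have hcast := castIm1 I hI
  obtain s | q₀ | u := j
  · -- j = inl s
    obtain ⟨i₀, o₀⟩ := s
    set v := vmapR k d I (Sum.inl ⟨i₀, o₀⟩) with hv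
    have hT : Tt k d I v = -(((I - 1 : ℕ) : ℝ)) := by
      simp [Tt, hv, vmapR, vmapZ, Finset.sum_const, Finset.card_univ]
    have hzero : ∀ (i : Fin k) (p : Fin (d i - 1)), i ≠ i₀ → v (Sum.inl ⟨i, p⟩) = 0 := by
      intro i p hne
      simp only [hv, vmapR, vmapZ, Sum.elim_inl]
      rw [if_neg, if_neg]
      · simp
      · rintro ⟨-, h⟩; exact hne h
      · intro h; rw [Sigma.mk.inj_iff] at h; exact hne h.1
    have hSb0 : ∀ i, i ≠ i₀ → Sb k d I v i = 0 := by
      intro i hne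
      simp [Sb, hzero i _ hne]
    have hphi0 : ∀ i, i ≠ i₀ → phi k d I v i (c i) = 0 := by
      intro i hne
      cases hc : c i with
      | none => simp [phi, hSb0 i hne]
      | some p => simp [phi, hSb0 i hne, hzero i p hne]
    have hsum : ∑ i, phi k d I v i (c i) = phi k d I v i₀ (c i₀) :=
      Finset.sum_eq_single i₀ (fun i _ hi => hphi0 i hi)
        (fun h => absurd (Finset.mem_univ i₀) h)
    have hbound : phi k d I v i₀ (c i₀) ≥ -(I : ℝ) := by
      cases o₀ with
      | some p₀ =>
          have hvp : ∀ p : Fin (d i₀ - 1), v (Sum.inl ⟨i₀, p⟩) = if p = p₀ then (I : ℝ) else 0 := by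
            intro p
            simp [hv, vmapR, vmapZ, Sigma.mk.inj_iff]
          have hS : Sb k d I v i₀ = (I : ℝ) := by
            simp [Sb, hvp, Finset.sum_ite_eq' Finset.univ p₀]
          cases hc : c i₀ with
          | none => simp [phi, hS]
          | some p =>
              simp only [phi, hS, hvp]
              have : (0 : ℝ) ≤ (d i₀ : ℝ) * (if p = p₀ then (I : ℝ) else 0) := by
                split <;> positivity
              linarith
      | none =>
          have hvp : ∀ p : Fin (d i₀ - 1), v (Sum.inl ⟨i₀, p⟩) = -(I : ℝ) := by
            intro p
            simp [hv, vmapR, vmapZ, Sigma.mk.inj_iff]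
          have hS : Sb k d I v i₀ = -(I : ℝ) * ((d i₀ - 1 : ℕ) : ℝ) := by
            simp [Sb, hvp, Finset.sum_const, Finset.card_univ, mul_comm]
          have hdc : ((d i₀ - 1 : ℕ) : ℝ) = (d i₀ : ℝ) - 1 := by
            have : 1 ≤ d i₀ := le_trans (by norm_num) (hd i₀)
            push_cast [Nat.cast_sub this]; ring
          cases hc : c i₀ with
          | none =>
              simp only [phi, hS]
              have h1 : (0:ℝ) ≤ (I : ℝ) * ((d i₀ - 1 : ℕ) : ℝ) := by positivity
              have h2 : (0:ℝ) ≤ (I : ℝ) := Nat.cast_nonneg _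
              linarith
          | some p =>
              simp only [phi, hS, hvp, hdc]
              have h2 : (0:ℝ) ≤ (I : ℝ) := Nat.cast_nonneg _
              nlinarith
    rw [hsum, hT, hcast]
    linarith
  · -- j = inr (inl q₀)
    set v := vmapR k d I (Sum.inr (Sum.inl q₀)) with hv
    have hSb0 : ∀ i, Sb k d I v i = 0 := by intro i; simp [Sb, hv, vmapR, vmapZ]
    have hphi0 : ∀ i, phi k d I v i (c i) = 0 := by
      intro i
      cases hc : c i with
      | none => simp [phi, hSb0 i]
      | some p => simp [phi, hSb0 i, hv, vmapR, vmapZ, Sb]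
    have hT : Tt k d I v = 1 := by
      have : ∀ q : Fin (I - 1), v (Sum.inr q)
          = (if q = q₀ then (I : ℝ) else 0) - 1 := by
        intro q
        simp only [hv, vmapR, vmapZ, Sum.elim_inr]
        split <;> push_cast <;> ring
      simp only [Tt, this, Finset.sum_sub_distrib,
        Finset.sum_ite_eq' Finset.univ q₀ (fun _ => (I : ℝ))]
      simp [Finset.card_univ, hcast]
    rw [hT]
    simp [hphi0]
  · -- j = inr (inr u)
    set v := vmapR k d I (Sum.inr (Sum.inr u)) with hv
    have hSb0 : ∀ i, Sb k d I v i = 0 := by intro i; simp [Sb, hv, vmapR, vmapZ]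
    have hphi0 : ∀ i, phi k d I v i (c i) = 0 := by
      intro i
      cases hc : c i with
      | none => simp [phi, hSb0 i]
      | some p => simp [phi, hSb0 i, hv, vmapR, vmapZ, Sb]
    have hT : Tt k d I v = -(((I - 1 : ℕ) : ℝ)) := by
      simp [Tt, hv, vmapR, vmapZ, Finset.sum_const, Finset.card_univ]
    rw [hT, hcast]
    have : ∑ i, phi k d I v i (c i) = 0 := by simp [hphi0]
    rw [this]
    have h2 : (0:ℝ) ≤ (I : ℝ) := Nat.cast_nonneg _
    linarith

lemma vmapR_dot_eVert_ge (j : VIdx k d I) (q : Fin (I - 1)) :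
    dotR k d I (vmapR k d I j) (eVert k d I q) ≥ -1 := by
  rw [dot_eVert]
  obtain s | q₀ | u := j
  · simp [vmapR, vmapZ]
  · simp only [vmapR, vmapZ, Sum.elim_inr]
    split
    · push_cast
      have : (0:ℝ) ≤ (I : ℝ) := Nat.cast_nonneg _
      linarith
    · simp
  · simp [vmapR, vmapZ]

lemma vmapR_mem_Q (hd : ∀ i, 2 ≤ d i) (hI : 1 ≤ I) (j : VIdx k d I) :
    vmapR k d I j ∈ {x : Coords k d I → ℝ |
      ∀ y ∈ convexHull ℝ (deltaVerts k d I), dotR k d I x y ≥ -1} := by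
  intro y hy
  have hsub : deltaVerts k d I ⊆ {y : Coords k d I → ℝ | dotR k d I (vmapR k d I j) y ≥ -1} := by
    rintro z (⟨c, rfl⟩ | ⟨q, rfl⟩)
    · exact vmapR_dot_uVert_ge k d I hd hI j c
    · exact vmapR_dot_eVert_ge k d I j q
  exact convexHull_min hsub (convex_dual_halfspace k d I _) hy

noncomputable def wgt (x : Coords k d I → ℝ) (m : Fin k → ℝ) : VIdx k d I → ℝ
  | Sum.inl ⟨i, some p⟩ => (x (Sum.inl ⟨i, p⟩) - m i) / I
  | Sum.inl ⟨i, none⟩ => -(m i) / I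
  | Sum.inr (Sum.inl q) => (x (Sum.inr q) + 1) / I
  | Sum.inr (Sum.inr _) => (1 - Tt k d I x + ∑ i, ((d i : ℝ) * m i - Sb k d I x i)) / I

lemma sum_vidx (F : VIdx k d I → ℝ) :
    ∑ j, F j = (∑ s : (i : Fin k) × Option (Fin (d i - 1)), F (Sum.inl s))
      + ((∑ q, F (Sum.inr (Sum.inl q))) + F (Sum.inr (Sum.inr ()))) := by
  rw [Fintype.sum_sum_type, Fintype.sum_sum_type]
  simp

lemma wgt_block_sum (hd : ∀ i, 2 ≤ d i) (x : Coords k d I → ℝ) (m : Fin k → ℝ) (i : Fin k) :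
    ∑ o : Option (Fin (d i - 1)), wgt k d I x m (Sum.inl ⟨i, o⟩)
      = (Sb k d I x i - (d i : ℝ) * m i) / I := by
  have hdc : ((d i - 1 : ℕ) : ℝ) = (d i : ℝ) - 1 := by
    have h1 : 1 ≤ d i := le_trans (by norm_num) (hd i)
    push_cast [Nat.cast_sub h1]; ring
  rw [Fintype.sum_option]
  simp only [wgt]
  rw [← Finset.sum_div, Finset.sum_sub_distrib, Finset.sum_const, Finset.card_univ,
    Fintype.card_fin, nsmul_eq_mul, hdc, ← add_div]
  have : Sb k d I x i = ∑ p, x (Sum.inl ⟨i, p⟩) := rfl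
  rw [← this]
  ring_nf

lemma wgt_sum (hd : ∀ i, 2 ≤ d i) (hI : 1 ≤ I) (x : Coords k d I → ℝ) (m : Fin k → ℝ) :
    ∑ j, wgt k d I x m j = 1 := by
  have hI0 : (I : ℝ) ≠ 0 := Nat.cast_ne_zero.2 (by omega)
  rw [sum_vidx, ← Finset.univ_sigma_univ, Finset.sum_sigma,
    Finset.sum_congr rfl (fun i _ => wgt_block_sum k d I hd x m i)]
  have hq : ∑ q, wgt k d I x m (Sum.inr (Sum.inl q))
      = (Tt k d I x + ((I - 1 : ℕ) : ℝ)) / I := by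
    simp only [wgt]
    rw [← Finset.sum_div, Finset.sum_add_distrib, Finset.sum_const, Finset.card_univ,
      Fintype.card_fin, nsmul_eq_mul, mul_one]
    have h : Tt k d I x = ∑ q, x (Sum.inr q) := rfl
    rw [← h]
  rw [hq]
  set A := ∑ i, ((d i : ℝ) * m i - Sb k d I x i) with hA
  have hSA : ∑ i, (Sb k d I x i - (d i : ℝ) * m i) / I = -A / I := by
    rw [← Finset.sum_div]
    congr 1
    have h0 : ∑ i, ((Sb k d I x i - (d i : ℝ) * m i) + ((d i : ℝ) * m i - Sb k d I x i)) = 0 := by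
      rw [Finset.sum_congr rfl (fun i _ => by ring : ∀ i ∈ Finset.univ,
        (Sb k d I x i - (d i : ℝ) * m i) + ((d i : ℝ) * m i - Sb k d I x i) = 0)]
      simp
    rw [Finset.sum_add_distrib, ← hA] at h0
    linarith
  rw [hSA]
  have hunit : wgt k d I x m (Sum.inr (Sum.inr ())) = (1 - Tt k d I x + A) / I := by
    simp only [wgt, hA]
  rw [hunit, castIm1 I hI]
  field_simp
  ring

lemma Q_subset_hull (hd : ∀ i, 2 ≤ d i) (hI : 1 ≤ I) :
    {x : Coords k d I → ℝ | ∀ y ∈ convexHull ℝ (deltaVerts k d I), dotR k d I x y ≥ -1}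
      ⊆ convexHull ℝ ((fun v : Coords k d I → ℤ => fun c => (v c : ℝ)) ''
          ↑(Finset.image (vmapZ k d I) Finset.univ)) := by
  intro x hx
  have hI0 : (I : ℝ) ≠ 0 := Nat.cast_ne_zero.2 (by omega)
  have hIpos : (0 : ℝ) ≤ (I : ℝ) := Nat.cast_nonneg _
  haveI inst : ∀ i, Nonempty (Fin (d i - 1)) := fun i => ⟨⟨0, by have := hd i; omega⟩⟩
  -- the vertex inequalities
  have hu : ∀ c : Choice k d, (∑ i, phi k d I x i (c i)) - Tt k d I x ≥ -1 := by
    intro c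
    have := hx (uVert k d I c) (subset_convexHull ℝ _ (uVert_mem k d I c))
    rwa [dot_uVert] at this
  have hz : ∀ q, x (Sum.inr q) ≥ -1 := by
    intro q
    have := hx (eVert k d I q) (subset_convexHull ℝ _ (eVert_mem k d I q))
    rwa [dot_eVert] at this
  -- the block minima
  set m : Fin k → ℝ := fun i =>
    min 0 ((Finset.univ : Finset (Fin (d i - 1))).inf' Finset.univ_nonempty
      (fun p => x (Sum.inl ⟨i, p⟩))) with hm
  have hm_le : ∀ i (p : Fin (d i - 1)), m i ≤ x (Sum.inl ⟨i, p⟩) := fun i p =>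
    le_trans (min_le_right _ _) (Finset.inf'_le _ (Finset.mem_univ p))
  have hm0 : ∀ i, m i ≤ 0 := fun i => min_le_left _ _
  have hphiex : ∀ i, ∃ o : Option (Fin (d i - 1)),
      phi k d I x i o = (d i : ℝ) * m i - Sb k d I x i := by
    intro i
    rcases le_or_gt 0 ((Finset.univ : Finset (Fin (d i - 1))).inf' Finset.univ_nonempty
        (fun p => x (Sum.inl ⟨i, p⟩))) with h | h
    · refine ⟨none, ?_⟩
      have hmi : m i = 0 := by simp only [hm]; exact min_eq_left h
      simp [phi, hmi]
    · obtain ⟨p, -, hp⟩ := Finset.exists_mem_eq_inf'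
        (Finset.univ_nonempty : (Finset.univ : Finset (Fin (d i - 1))).Nonempty)
        (fun p => x (Sum.inl ⟨i, p⟩))
      refine ⟨some p, ?_⟩
      have hmi : m i = x (Sum.inl ⟨i, p⟩) := by
        simp only [hm]; rw [min_eq_right h.le, hp]
      simp [phi, hmi]
  have master : (∑ i, ((d i : ℝ) * m i - Sb k d I x i)) - Tt k d I x ≥ -1 := by
    have h := hu (fun i => Classical.choose (hphiex i))
    rwa [Finset.sum_congr rfl (fun i _ => Classical.choose_spec (hphiex i))] at h
  -- nonnegativity of the weights
  have hw0 : ∀ j ∈ (Finset.univ : Finset (VIdx k d I)), 0 ≤ wgt k d I x m j := by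
    rintro ((⟨i, _ | p⟩ : (i : Fin k) × Option (Fin (d i - 1))) | (q | u)) -
    · -- none
      simp only [wgt]
      have := hm0 i
      apply div_nonneg _ hIpos
      linarith
    · -- some p
      simp only [wgt]
      apply div_nonneg _ hIpos
      have := hm_le i p
      linarith
    · simp only [wgt]
      apply div_nonneg _ hIpos
      have := hz q
      linarith
    · simp only [wgt]
      apply div_nonneg _ hIpos
      linarith [master]
  -- the point is the center of mass
  have hrepr : x = ∑ j, wgt k d I x m j • vmapR k d I j := by
    funext a
    rw [Finset.sum_apply]
    simp only [Pi.smul_apply, smul_eq_mul]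
    cases a with
    | inl pp =>
        rw [sum_vidx]
        have hval : ∀ s : (i : Fin k) × Option (Fin (d i - 1)),
            vmapR k d I (Sum.inl s) (Sum.inl pp)
              = (if (⟨pp.1, some pp.2⟩ : (i : Fin k) × Option (Fin (d i - 1))) = s
                  then (I : ℝ) else 0)
                + (if s.2 = none ∧ pp.1 = s.1 then -(I : ℝ) else 0) := by
          intro s
          simp only [vmapR, vmapZ, Sum.elim_inl, Int.cast_add]
          congr 1 <;> split <;> simp
        have hz1 : ∀ q, vmapR k d I (Sum.inr (Sum.inl q)) (Sum.inl pp) = 0 := by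
          intro q; simp [vmapR, vmapZ]
        have hz2 : vmapR k d I (Sum.inr (Sum.inr ())) (Sum.inl pp) = 0 := by
          simp [vmapR, vmapZ]
        simp only [hval, hz1, hz2, mul_zero, Finset.sum_const_zero, add_zero]
        rw [Finset.sum_congr rfl (fun s _ => mul_add (wgt k d I x m (Sum.inl s)) _ _),
          Finset.sum_add_distrib]
        have h1 : ∑ s : (i : Fin k) × Option (Fin (d i - 1)),
            wgt k d I x m (Sum.inl s)
              * (if (⟨pp.1, some pp.2⟩ : (i : Fin k) × Option (Fin (d i - 1))) = s
                  then (I : ℝ) else 0)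
            = wgt k d I x m (Sum.inl ⟨pp.1, some pp.2⟩) * I := by
          simp only [mul_ite, mul_zero]
          rw [Finset.sum_ite_eq]
          simp
        have hiff : ∀ s : (i : Fin k) × Option (Fin (d i - 1)),
            (s.2 = none ∧ pp.1 = s.1) ↔ s = ⟨pp.1, none⟩ := by
          intro s
          constructor
          · rintro ⟨h2, h1⟩
            rcases s with ⟨si, so⟩
            simp only at h2 h1
            subst h1
            subst h2
            rfl
          · rintro rfl
            exact ⟨rfl, rfl⟩
        have h2 : ∑ s : (i : Fin k) × Option (Fin (d i - 1)),
            wgt k d I x m (Sum.inl s) * (if s.2 = none ∧ pp.1 = s.1 then -(I : ℝ) else 0)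
            = wgt k d I x m (Sum.inl ⟨pp.1, none⟩) * (-(I : ℝ)) := by
          rw [Finset.sum_congr rfl (fun s _ => by rw [if_congr (hiff s) rfl rfl])]
          simp only [mul_ite, mul_zero]
          rw [Finset.sum_ite_eq']
          simp
        rw [h1, h2]
        simp only [wgt]
        field_simp
        ring
    | inr q₀ =>
        rw [sum_vidx]
        have hval1 : ∀ s : (i : Fin k) × Option (Fin (d i - 1)),
            vmapR k d I (Sum.inl s) (Sum.inr q₀) = -1 := by
          intro s; simp [vmapR, vmapZ]
        have hval2 : ∀ q, vmapR k d I (Sum.inr (Sum.inl q)) (Sum.inr q₀)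
            = (if q₀ = q then (I : ℝ) else 0) - 1 := by
          intro q
          simp only [vmapR, vmapZ, Sum.elim_inr]
          split <;> push_cast <;> ring
        have hval3 : vmapR k d I (Sum.inr (Sum.inr ())) (Sum.inr q₀) = -1 := by
          simp [vmapR, vmapZ]
        simp only [hval1, hval2, hval3]
        have hq : ∑ q, wgt k d I x m (Sum.inr (Sum.inl q)) * ((if q₀ = q then (I : ℝ) else 0) - 1)
            = wgt k d I x m (Sum.inr (Sum.inl q₀)) * I
              - ∑ q, wgt k d I x m (Sum.inr (Sum.inl q)) := by
          rw [Finset.sum_congr rfl (fun q _ => by ring :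
              ∀ q ∈ Finset.univ, wgt k d I x m (Sum.inr (Sum.inl q))
                * ((if q₀ = q then (I : ℝ) else 0) - 1)
              = wgt k d I x m (Sum.inr (Sum.inl q)) * (if q₀ = q then (I : ℝ) else 0)
                - wgt k d I x m (Sum.inr (Sum.inl q))),
            Finset.sum_sub_distrib]
          congr 1
          simp only [mul_ite, mul_zero]
          rw [Finset.sum_ite_eq]
          simp
        have hS := wgt_sum k d I hd hI x m
        rw [sum_vidx] at hS
        have hwq : wgt k d I x m (Sum.inr (Sum.inl q₀)) * I = x (Sum.inr q₀) + 1 := by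
          simp only [wgt]
          field_simp
        simp only [mul_neg, mul_one]
        rw [hq, hwq, Finset.sum_neg_distrib]
        linarith
  -- conclude
  have hmem : Finset.univ.centerMass (wgt k d I x m) (vmapR k d I)
      ∈ convexHull ℝ ((fun v : Coords k d I → ℤ => fun c => (v c : ℝ)) ''
          ↑(Finset.image (vmapZ k d I) Finset.univ)) := by
    apply Finset.centerMass_mem_convexHull _ hw0
    · rw [wgt_sum k d I hd hI x m]; norm_num
    · intro j _
      exact ⟨vmapZ k d I j, Finset.mem_coe.2 (Finset.mem_image_of_mem _ (Finset.mem_univ j)), rfl⟩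
  rwa [Finset.centerMass_eq_of_sum_1 _ _ (wgt_sum k d I hd hI x m), ← hrepr] at hmem

noncomputable def nu (x : Coords k d I → ℝ) (M : ℝ) (i : Fin k) :
    Option (Fin (d i - 1)) → ℝ
  | none => (M - Sb k d I x i) / (d i)
  | some p => (x (Sum.inl ⟨i, p⟩) + M) / (d i)

lemma nu_sum (hd : ∀ i, 2 ≤ d i) (x : Coords k d I → ℝ) (M : ℝ) (i : Fin k) :
    ∑ o, nu k d I x M i o = M := by
  have hd0 : (d i : ℝ) ≠ 0 := Nat.cast_ne_zero.2 (by have := hd i; omega)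
  have hdc : ((d i - 1 : ℕ) : ℝ) = (d i : ℝ) - 1 := by
    have h1 : 1 ≤ d i := le_trans (by norm_num) (hd i)
    push_cast [Nat.cast_sub h1]; ring
  rw [Fintype.sum_option]
  simp only [nu]
  rw [← Finset.sum_div, Finset.sum_add_distrib, Finset.sum_const, Finset.card_univ,
    Fintype.card_fin, nsmul_eq_mul, hdc, ← add_div]
  have h : Sb k d I x i = ∑ p, x (Sum.inl ⟨i, p⟩) := rfl
  rw [← h]
  field_simp
  ring

noncomputable def wgt1 (x : Coords k d I → ℝ) (M : ℝ) : Choice k d ⊕ Fin (I - 1) → ℝ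
  | Sum.inl c => (M * ∏ i, nu k d I x M i (c i)) / M ^ k
  | Sum.inr q => x (Sum.inr q) + M

lemma wgt1_u_sum (hd : ∀ i, 2 ≤ d i) (x : Coords k d I → ℝ) (M : ℝ) (hM : 0 < M) :
    ∑ c : Choice k d, wgt1 k d I x M (Sum.inl c) = M := by
  simp only [wgt1]
  rw [← Finset.sum_div, ← Finset.mul_sum, sum_prod_choice,
    Finset.prod_congr rfl (fun i _ => nu_sum k d I hd x M i), Finset.prod_const,
    Finset.card_univ, Fintype.card_fin]
  field_simp

lemma Oset_subset (hd : ∀ i, 2 ≤ d i) (hI : 1 ≤ I) (x : Coords k d I → ℝ)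
    (hM : 0 < (1 - Tt k d I x) / I)
    (hq : ∀ q, 0 < x (Sum.inr q) + (1 - Tt k d I x) / I)
    (hp : ∀ pp : (i : Fin k) × Fin (d i - 1), 0 < x (Sum.inl pp) + (1 - Tt k d I x) / I)
    (hS : ∀ i, Sb k d I x i < (1 - Tt k d I x) / I) :
    x ∈ convexHull ℝ (deltaVerts k d I) := by
  have hI0 : (I : ℝ) ≠ 0 := Nat.cast_ne_zero.2 (by omega)
  set M := (1 - Tt k d I x) / I with hMdef
  have hIM : (I : ℝ) * M = 1 - Tt k d I x := by
    rw [hMdef]; field_simp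
  have hnu0 : ∀ i (o : Option (Fin (d i - 1))), 0 ≤ nu k d I x M i o := by
    intro i o
    have hd0 : (0:ℝ) ≤ (d i : ℝ) := Nat.cast_nonneg _
    cases o with
    | none => exact div_nonneg (by linarith [hS i]) hd0
    | some p => exact div_nonneg (by linarith [hp ⟨i, p⟩]) hd0
  have hw0 : ∀ j ∈ (Finset.univ : Finset (Choice k d ⊕ Fin (I - 1))),
      0 ≤ wgt1 k d I x M j := by
    rintro (c | q) -
    · simp only [wgt1]
      apply div_nonneg
      · exact mul_nonneg hM.le (Finset.prod_nonneg fun i _ => hnu0 i (c i))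
      · positivity
    · simp only [wgt1]
      linarith [hq q]
  have hqsum : ∑ q, wgt1 k d I x M (Sum.inr q) = Tt k d I x + ((I - 1 : ℕ) : ℝ) * M := by
    simp only [wgt1]
    rw [Finset.sum_add_distrib, Finset.sum_const, Finset.card_univ, Fintype.card_fin,
      nsmul_eq_mul]
    have h : Tt k d I x = ∑ q, x (Sum.inr q) := rfl
    rw [← h]
  have hsum : ∑ j, wgt1 k d I x M j = 1 := by
    rw [Fintype.sum_sum_type, wgt1_u_sum k d I hd x M hM, hqsum, castIm1 I hI]
    have : M + (Tt k d I x + ((I : ℝ) - 1) * M) = (I : ℝ) * M + Tt k d I x := by ring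
    rw [this, hIM]
    ring
  have hrepr : x = ∑ j, wgt1 k d I x M j •
      (Sum.elim (uVert k d I) (eVert k d I) j) := by
    funext a
    rw [Finset.sum_apply]
    simp only [Pi.smul_apply, smul_eq_mul]
    rw [Fintype.sum_sum_type]
    cases a with
    | inl pp =>
        have hz1 : ∀ q, eVert k d I q (Sum.inl pp) = 0 := fun q => rfl
        simp only [Sum.elim_inl, Sum.elim_inr, hz1, mul_zero, Finset.sum_const_zero, add_zero]
        have hkpos : 0 < k := pp.1.pos
        have hg : ∀ c : Choice k d, uVert k d I c (Sum.inl pp)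
            = (if c pp.1 = some pp.2 then (d pp.1 : ℝ) - 1 else -1) := fun c => rfl
        have step1 : ∑ c : Choice k d, wgt1 k d I x M (Sum.inl c) * uVert k d I c (Sum.inl pp)
            = (M / M ^ k) * ∑ c : Choice k d, (∏ i, nu k d I x M i (c i)) *
                (if c pp.1 = some pp.2 then (d pp.1 : ℝ) - 1 else -1) := by
          rw [Finset.mul_sum]
          refine Finset.sum_congr rfl fun c _ => ?_
          rw [hg]
          simp only [wgt1]
          ring
        rw [step1, sum_prod_choice_mul k d (nu k d I x M) pp.1
          (fun o => if o = some pp.2 then (d pp.1 : ℝ) - 1 else -1)]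
        have herase : ∏ i ∈ Finset.univ.erase pp.1, ∑ o, nu k d I x M i o = M ^ (k - 1) := by
          rw [Finset.prod_congr rfl (fun i _ => nu_sum k d I hd x M i), Finset.prod_const,
            Finset.card_erase_of_mem (Finset.mem_univ _), Finset.card_univ, Fintype.card_fin]
        have hd0 : (d pp.1 : ℝ) ≠ 0 := Nat.cast_ne_zero.2 (by have := hd pp.1; omega)
        have hinner : ∑ o, nu k d I x M pp.1 o *
            (if o = some pp.2 then (d pp.1 : ℝ) - 1 else -1) = x (Sum.inl pp) := by
          have hsplit : ∀ o : Option (Fin (d pp.1 - 1)),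
              nu k d I x M pp.1 o * (if o = some pp.2 then (d pp.1 : ℝ) - 1 else -1)
                = (if o = some pp.2 then (d pp.1 : ℝ) * nu k d I x M pp.1 o else 0)
                  - nu k d I x M pp.1 o := by
            intro o
            split <;> ring
          rw [Finset.sum_congr rfl fun o _ => hsplit o, Finset.sum_sub_distrib,
            Finset.sum_ite_eq' Finset.univ (some pp.2)
              (fun o => (d pp.1 : ℝ) * nu k d I x M pp.1 o),
            nu_sum k d I hd x M pp.1]
          simp only [Finset.mem_univ, if_true]
          have : (d pp.1 : ℝ) * nu k d I x M pp.1 (some pp.2) = x (Sum.inl pp) + M := by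
            simp only [nu]
            field_simp
          rw [this]
          ring
        rw [herase, hinner]
        have hMk : M ^ k = M * M ^ (k - 1) := by
          conv_lhs => rw [show k = (k - 1) + 1 by omega]
          rw [pow_succ]
          ring
        rw [hMk]
        field_simp
    | inr q₀ =>
        have hz1 : ∀ c : Choice k d, uVert k d I c (Sum.inr q₀) = -1 := fun c => rfl
        have hz2 : ∀ q, eVert k d I q (Sum.inr q₀) = if q₀ = q then 1 else 0 := fun q => rfl
        simp only [Sum.elim_inl, Sum.elim_inr, hz1, hz2, mul_neg, mul_one, mul_ite, mul_zero]
        rw [Finset.sum_neg_distrib, wgt1_u_sum k d I hd x M hM,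
          Finset.sum_ite_eq Finset.univ q₀ (fun q => wgt1 k d I x M (Sum.inr q))]
        simp only [Finset.mem_univ, if_true, wgt1]
        ring
  have hmem : Finset.univ.centerMass (wgt1 k d I x M)
      (Sum.elim (uVert k d I) (eVert k d I)) ∈ convexHull ℝ (deltaVerts k d I) := by
    apply Finset.centerMass_mem_convexHull _ hw0
    · rw [hsum]; norm_num
    · rintro (c | q) -
      · exact uVert_mem k d I c
      · exact eVert_mem k d I q
  rwa [Finset.centerMass_eq_of_sum_1 _ _ hsum, ← hrepr] at hmem


/-- `Δ` is reflexive: it contains the origin in its interior, and its dual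
polytope `{x : ⟨x,y⟩ ≥ -1 ∀ y ∈ Δ}` is a lattice polytope, i.e. it is the convex hull of
finitely many points of `ℤ^n` (so all its vertices are lattice points). -/
theorem delta_reflexive (hd : ∀ i, 2 ≤ d i) (hI : 1 ≤ I) :
    (0 : Coords k d I → ℝ) ∈ interior (convexHull ℝ (deltaVerts k d I)) ∧
    ∃ V : Finset (Coords k d I → ℤ),
      {x | ∀ y ∈ convexHull ℝ (deltaVerts k d I), dotR k d I x y ≥ -1} =
        convexHull ℝ ((fun v : Coords k d I → ℤ => fun c => (v c : ℝ)) '' ↑V) := by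
  constructor
  · -- the origin is in the interior
    have hIpos : (0:ℝ) < (I : ℝ) := by exact_mod_cast Nat.pos_of_ne_zero (by omega)
    have hcT : Continuous (fun x : Coords k d I → ℝ => (1 - Tt k d I x) / I) := by
      apply Continuous.div_const
      exact continuous_const.sub (continuous_finset_sum _ fun q _ => continuous_apply _)
    set O : Set (Coords k d I → ℝ) := {x |
      0 < (1 - Tt k d I x) / I ∧
      (∀ q, 0 < x (Sum.inr q) + (1 - Tt k d I x) / I) ∧
      (∀ pp : (i : Fin k) × Fin (d i - 1), 0 < x (Sum.inl pp) + (1 - Tt k d I x) / I) ∧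
      (∀ i, Sb k d I x i < (1 - Tt k d I x) / I)} with hO
    have hopen : IsOpen O := by
      have h1 : IsOpen {x : Coords k d I → ℝ | 0 < (1 - Tt k d I x) / I} :=
        isOpen_lt continuous_const hcT
      have h2 : IsOpen {x : Coords k d I → ℝ |
          ∀ q, 0 < x (Sum.inr q) + (1 - Tt k d I x) / I} := by
        have hB : {x : Coords k d I → ℝ | ∀ q, 0 < x (Sum.inr q) + (1 - Tt k d I x) / I}
            = ⋂ q, {x : Coords k d I → ℝ | 0 < x (Sum.inr q) + (1 - Tt k d I x) / I} := by
          ext x; simp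
        rw [hB]
        exact isOpen_iInter_of_finite fun q =>
          isOpen_lt continuous_const ((continuous_apply _).add hcT)
      have h3 : IsOpen {x : Coords k d I → ℝ |
          ∀ pp : (i : Fin k) × Fin (d i - 1), 0 < x (Sum.inl pp) + (1 - Tt k d I x) / I} := by
        have hB : {x : Coords k d I → ℝ |
            ∀ pp : (i : Fin k) × Fin (d i - 1), 0 < x (Sum.inl pp) + (1 - Tt k d I x) / I}
            = ⋂ pp : (i : Fin k) × Fin (d i - 1),
                {x : Coords k d I → ℝ | 0 < x (Sum.inl pp) + (1 - Tt k d I x) / I} := by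
          ext x; simp
        rw [hB]
        exact isOpen_iInter_of_finite fun pp =>
          isOpen_lt continuous_const ((continuous_apply _).add hcT)
      have h4 : IsOpen {x : Coords k d I → ℝ |
          ∀ i, Sb k d I x i < (1 - Tt k d I x) / I} := by
        have hB : {x : Coords k d I → ℝ | ∀ i, Sb k d I x i < (1 - Tt k d I x) / I}
            = ⋂ i, {x : Coords k d I → ℝ | Sb k d I x i < (1 - Tt k d I x) / I} := by
          ext x; simp
        rw [hB]
        refine isOpen_iInter_of_finite fun i => isOpen_lt ?_ hcT
        exact continuous_finset_sum _ fun p _ => continuous_apply _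
      rw [hO]
      exact h1.inter (h2.inter (h3.inter h4))
    have h0 : (0 : Coords k d I → ℝ) ∈ O := by
      have hT0 : Tt k d I (0 : Coords k d I → ℝ) = 0 := by simp [Tt]
      have hS0 : ∀ i, Sb k d I (0 : Coords k d I → ℝ) i = 0 := by intro i; simp [Sb]
      refine ⟨?_, fun q => ?_, fun pp => ?_, fun i => ?_⟩ <;>
        simp [hT0, hS0] <;> positivity
    have hsub : O ⊆ convexHull ℝ (deltaVerts k d I) := by
      rintro x ⟨h1, h2, h3, h4⟩
      exact Oset_subset k d I hd hI x h1 h2 h3 h4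
    exact interior_maximal hsub hopen h0
  · refine ⟨Finset.image (vmapZ k d I) Finset.univ, ?_⟩
    apply Set.Subset.antisymm (Q_subset_hull k d I hd hI)
    apply convexHull_min _ (convex_Q k d I)
    rintro y ⟨vz, hvz, rfl⟩
    rw [Finset.mem_coe, Finset.mem_image] at hvz
    obtain ⟨j, -, rfl⟩ := hvz
    exact vmapR_mem_Q k d I hd hI j
end

section
/- A convex combination with positive rational weights of the rows of M_{d_1,…,d_k;I} equal to 0 exists; explicitly, 0 lies in the interior of ∇. Concrete verifiable form: there exist positive rationals λ_r summing to 1, indexed by the rows r of M_{d_1,…,d_k;I}, with Σ λ_r · r = 0. -/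
variable (k : ℕ) (d : Fin k → ℕ) (I : ℕ)

/-- Index type for the rows of `M_{d_1,…,d_k;I}`. -/
abbrev RowIdx := ((i : Fin k) × Fin (d i - 1)) ⊕ Fin k ⊕ Fin (I - 1)

/-- The rows of `M_{d_1,…,d_k;I}` as rational vectors. -/
def row : RowIdx k d I → Coords k d I → ℚ :=
  Sum.elim
    (fun p => Sum.elim (fun q => if q = p then (I : ℚ) else 0) (fun _ => -1))
    (Sum.elim
      (fun i => Sum.elim
        (fun q : (i : Fin k) × Fin (d i - 1) => if q.1 = i then -(I : ℚ) else 0)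
        (fun _ => -1))
      (fun q => Sum.elim (fun _ => (0 : ℚ))
        (fun q' => if q' = q then (I : ℚ) - 1 else -1)))

/-- `0` is a convex combination of the rows of `M_{d_1,…,d_k;I}` with all
weights positive (hence `0` lies in the interior of `∇`). -/
theorem zero_positive_convex_combination (hk : 0 < k) (hd : ∀ i, 2 ≤ d i) (hI : 1 ≤ I) :
    ∃ l : RowIdx k d I → ℚ, (∀ r, 0 < l r) ∧ (∑ r, l r = 1) ∧
      (∑ r, l r • row k d I r) = 0 := by
  classical
  set D : ℕ := ∑ i, d i with hD
  have hDk : (k : ℕ) ≤ D := by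
    calc k = ∑ _i : Fin k, 1 := by simp
    _ ≤ D := Finset.sum_le_sum (fun i _ => le_trans (by norm_num) (hd i))
  have hDpos : 0 < D := lt_of_lt_of_le hk hDk
  have hIQ : (0:ℚ) < I := by exact_mod_cast hI
  have hDQ : (0:ℚ) < D := by exact_mod_cast hDpos
  set t : ℚ := ((I : ℚ) * D)⁻¹ with ht
  have htpos : 0 < t := by positivity
  refine ⟨Sum.elim (fun _ => t) (Sum.elim (fun _ => t) (fun _ => t * D)), ?_, ?_, ?_⟩
  · rintro (p | i | q)
    exacts [htpos, htpos, mul_pos htpos hDQ]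
  · have hcard : ((∑ i, (d i - 1) : ℕ) : ℚ) = D - k := by
      push_cast [Nat.cast_sub (le_trans (by norm_num : 1 ≤ 2) (hd _))]
      rw [Finset.sum_sub_distrib]
      simp [hD]
    have hI1 : ((I - 1 : ℕ) : ℚ) = I - 1 := by
      push_cast [Nat.cast_sub hI]; ring
    rw [Fintype.sum_sum_type, Fintype.sum_sum_type]
    simp only [Sum.elim_inl, Sum.elim_inr, Finset.sum_const, smul_eq_mul,
      Finset.card_univ, Fintype.card_sigma, Fintype.card_fin, nsmul_eq_mul]
    rw [hcard, hI1, ht]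
    field_simp
    ring
  · funext x
    rw [Finset.sum_apply]
    rcases x with p | q'
    · rw [Fintype.sum_sum_type, Fintype.sum_sum_type]
      simp only [row, Sum.elim_inl, Sum.elim_inr, Pi.smul_apply, smul_eq_mul,
        mul_ite, mul_zero, mul_neg, Pi.zero_apply]
      rw [Finset.sum_ite_eq Finset.univ p (fun _ => t * I)]
      rw [Finset.sum_ite_eq Finset.univ p.1 (fun _ => -(t * I))]
      simp
    · rw [Fintype.sum_sum_type, Fintype.sum_sum_type]
      simp only [row, Sum.elim_inl, Sum.elim_inr, Pi.smul_apply, smul_eq_mul,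
        Pi.zero_apply, Finset.sum_const, Finset.card_univ, Fintype.card_sigma,
        Fintype.card_fin, nsmul_eq_mul, mul_neg, mul_one]
      have hcard : ((∑ i, (d i - 1) : ℕ) : ℚ) = D - k := by
        push_cast [Nat.cast_sub (le_trans (by norm_num : 1 ≤ 2) (hd _))]
        rw [Finset.sum_sub_distrib]
        simp [hD]
      have hI1 : ((I - 1 : ℕ) : ℚ) = I - 1 := by
        push_cast [Nat.cast_sub hI]; ring
      have hsplit : ∀ q : Fin (I - 1),
          (if q' = q then (I : ℚ) - 1 else -1) = (if q' = q then (I : ℚ) else 0) - 1 := by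
        intro q; split <;> ring
      simp only [hsplit, mul_sub, mul_ite, mul_zero, mul_one]
      rw [Finset.sum_sub_distrib, Finset.sum_ite_eq Finset.univ q' (fun _ => t * D * I)]
      simp only [Finset.mem_univ, if_true, Finset.sum_const, Finset.card_univ,
        Fintype.card_fin, nsmul_eq_mul]
      rw [hcard, hI1]
      ring
end
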